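/- Let G be a finite nonsolvable group whose solvable radical R(G) is nontrivial, and let X ⊆ G be a set of elements disjoint from R(G). Then X is a solvabilizer covering of G (i.e., G = ∪_{x∈X} Sol_G(x)) if and only if the set of cosets {xR(G) : x ∈ X} is a solvabilizer covering of the quotient group G/R(G) (i.e., G/R(G) = ∪_{x∈X} Sol_{G/R(G)}(xR(G))). -/

import Mathlib

open scoped MatrixGroups

/-- The solvabilizer of `x` in `G`:
`Sol_G(x) = {y : the subgroup generated by x and y is solvable}`. -/
def Sol {G : Type*} [Group G] (x : G) : Set G :=
  {y | IsSolvable ↥(Subgroup.closure ({x, y} : Set G))}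

/-- The solvabilizer number `α(G)`: the minimum cardinality of a set `X` of elements lying
outside the solvable radical (equivalently, outside every solvable normal subgroup)
whose solvabilizers cover `G`. -/
noncomputable def solvNumber (G : Type*) [Group G] : ℕ :=
  sInf {n : ℕ | ∃ X : Finset G,
    (∀ x ∈ X, ¬∃ N : Subgroup G, N.Normal ∧ IsSolvable ↥N ∧ x ∈ N) ∧
    X.card = n ∧ ∀ g : G, ∃ x ∈ X, g ∈ Sol x}

lemma sol_key {G : Type*} [Group G] (R : Subgroup G) [R.Normal] (hRsolv : IsSolvable ↥R)
    (x y : G) :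
    IsSolvable ↥(Subgroup.closure ({x, y} : Set G)) ↔
      IsSolvable ↥(Subgroup.closure ({(x : G ⧸ R), (y : G ⧸ R)} : Set (G ⧸ R))) := by
  have himg : (Subgroup.closure ({x, y} : Set G)).map (QuotientGroup.mk' R)
      = Subgroup.closure ({(x : G ⧸ R), (y : G ⧸ R)} : Set (G ⧸ R)) := by
    rw [MonoidHom.map_closure]
    congr 1
    simp [Set.image_pair]
  constructor
  · intro h
    rw [← himg]
    exact @solvable_of_surjective _ _ _ _ _ ((QuotientGroup.mk' R).subgroupMap_surjective _) h
  · intro h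
    set H := Subgroup.closure ({x, y} : Set G) with hH
    set K := Subgroup.closure ({(x : G ⧸ R), (y : G ⧸ R)} : Set (G ⧸ R)) with hK
    have hmem : ∀ h : H, ((h : G) : G ⧸ R) ∈ K := by
      intro h
      rw [← himg]
      exact Subgroup.mem_map_of_mem _ h.2
    let g : ↥H →* ↥K :=
      MonoidHom.codRestrict ((QuotientGroup.mk' R).comp H.subtype) K hmem
    have hker : IsSolvable ↥g.ker := by
      let ψ : ↥g.ker →* ↥R := {
        toFun := fun k => ⟨(k : H), by
          have := k.2
          simp only [MonoidHom.mem_ker, g] at this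
          have : ((k : H) : G) ∈ (QuotientGroup.mk' R).ker := by
            rw [MonoidHom.mem_ker]
            exact congrArg Subtype.val this
          rwa [QuotientGroup.ker_mk'] at this⟩
        map_one' := rfl
        map_mul' := fun a b => rfl }
      have hinj : Function.Injective ψ := by
        intro a b hab
        have : ((a : H) : G) = ((b : H) : G) := by
          have h2 : (ψ a).1 = (ψ b).1 := by rw [hab]
          exact h2
        exact Subtype.ext (Subtype.ext this)
      exact @solvable_of_solvable_injective _ _ _ _ _ hinj hRsolv
    exact solvable_of_ker_le_range (hG' := hker) (hG'' := h) g.ker.subtype g (by simp)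

/-- Theorem (quotient): for a finite nonsolvable group `G` with nontrivial solvable
radical `R`, a set `X ⊆ G \ R` is a solvabilizer covering of `G` iff the corresponding
set of cosets is a solvabilizer covering of `G ⧸ R`. -/
theorem stmt0 {G : Type*} [Group G] [Finite G] (hG : ¬IsSolvable G)
    (R : Subgroup G) [R.Normal] (hRsolv : IsSolvable ↥R)
    (hRmax : ∀ N : Subgroup G, N.Normal → IsSolvable ↥N → N ≤ R)
    (hRne : R ≠ ⊥)
    (X : Set G) (hX : ∀ x ∈ X, x ∉ R) :
    (∀ g : G, ∃ x ∈ X, g ∈ Sol x) ↔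
      (∀ g : G ⧸ R, ∃ x ∈ X, g ∈ Sol ((x : G) : G ⧸ R)) := by
  constructor
  · intro h g
    obtain ⟨g₀, rfl⟩ := QuotientGroup.mk_surjective g
    obtain ⟨x, hxX, hsol⟩ := h g₀
    exact ⟨x, hxX, (sol_key R hRsolv x g₀).mp hsol⟩
  · intro h g
    obtain ⟨x, hxX, hsol⟩ := h (g : G ⧸ R)
    exact ⟨x, hxX, (sol_key R hRsolv x g).mpr hsol⟩
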